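/- If a circle C contains four points x₁, x₂, x₃, x₄ lying in that cyclic order on C, with x₁, x₃ in the interior of a set Q and x₂, x₄ in the interior of a set P, then no circle separates P from Q. That is, there is no circle Σ such that the open disk bounded by Σ contains the interior of one of the sets and is disjoint from the interior of the other. -/

import Mathlib

open Metric Real

private lemma prod_sin_aux (u v : ℝ) :
    Real.sin (2*v) - Real.sin (2*u + 2*v) + Real.sin (2*u)
      = 4 * Real.sin u * Real.sin v * Real.sin (u + v) := by
  simp only [Real.sin_add, Real.cos_add, Real.sin_two_mul, Real.cos_two_mul]
  linear_combination (-(4 * Real.sin v * Real.cos v)) * Real.sin_sq_add_cos_sq u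
    + (-(4 * Real.sin u * Real.cos u)) * Real.sin_sq_add_cos_sq v

private lemma D_pos (α β γ : ℝ) (h1 : α < β) (h2 : β < γ) (h3 : γ < α + 2*π) :
    0 < Real.sin (γ - β) - Real.sin (γ - α) + Real.sin (β - α) := by
  have h := prod_sin_aux ((β - α)/2) ((γ - β)/2)
  rw [show 2*((β-α)/2) + 2*((γ-β)/2) = γ - α from by ring,
      show 2*((γ-β)/2) = γ - β from by ring,
      show 2*((β-α)/2) = β - α from by ring,
      show (β-α)/2 + (γ-β)/2 = (γ-α)/2 from by ring] at h
  have s1 : 0 < Real.sin ((β - α)/2) :=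
    Real.sin_pos_of_pos_of_lt_pi (by linarith) (by linarith)
  have s2 : 0 < Real.sin ((γ - β)/2) :=
    Real.sin_pos_of_pos_of_lt_pi (by linarith) (by linarith)
  have s3 : 0 < Real.sin ((γ - α)/2) :=
    Real.sin_pos_of_pos_of_lt_pi (by linarith) (by linarith)
  nlinarith [mul_pos (mul_pos s1 s2) s3]

private noncomputable def trigD (α β γ : ℝ) : ℝ :=
  Real.sin (γ - β) - Real.sin (γ - α) + Real.sin (β - α)

private lemma trigD_pos (α β γ : ℝ) (h1 : α < β) (h2 : β < γ) (h3 : γ < α + 2*π) :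
    0 < trigD α β γ := D_pos α β γ h1 h2 h3

/-- A function `θ ↦ a + b cos θ + d sin θ` cannot have sign pattern
`≥0, <0, ≥0, <0` at four points in cyclic order. -/
private lemma key_sign (a b d θ₁ θ₂ θ₃ θ₄ : ℝ)
    (h12 : θ₁ < θ₂) (h23 : θ₂ < θ₃) (h34 : θ₃ < θ₄) (h41 : θ₄ < θ₁ + 2*π)
    (h1 : 0 ≤ a + b * Real.cos θ₁ + d * Real.sin θ₁)
    (h2 : a + b * Real.cos θ₂ + d * Real.sin θ₂ < 0)
    (h3 : 0 ≤ a + b * Real.cos θ₃ + d * Real.sin θ₃)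
    (h4 : a + b * Real.cos θ₄ + d * Real.sin θ₄ < 0) : False := by
  have hπ := Real.pi_pos
  have hI : trigD θ₂ θ₃ θ₄ * (a + b * Real.cos θ₁ + d * Real.sin θ₁)
      - trigD θ₁ θ₃ θ₄ * (a + b * Real.cos θ₂ + d * Real.sin θ₂)
      + trigD θ₁ θ₂ θ₄ * (a + b * Real.cos θ₃ + d * Real.sin θ₃)
      - trigD θ₁ θ₂ θ₃ * (a + b * Real.cos θ₄ + d * Real.sin θ₄) = 0 := by
    simp only [trigD, Real.sin_sub]
    ring
  have p1 : 0 < trigD θ₂ θ₃ θ₄ := trigD_pos _ _ _ h23 h34 (by linarith)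
  have p2 : 0 < trigD θ₁ θ₃ θ₄ := trigD_pos _ _ _ (by linarith) h34 (by linarith)
  have p3 : 0 < trigD θ₁ θ₂ θ₄ := trigD_pos _ _ _ h12 (by linarith) (by linarith)
  have p4 : 0 < trigD θ₁ θ₂ θ₃ := trigD_pos _ _ _ h12 h23 (by linarith)
  nlinarith [hI, mul_nonneg p1.le h1, mul_nonneg p3.le h3,
    mul_pos p2 (neg_pos.mpr h2), mul_pos p4 (neg_pos.mpr h4)]

/-- If a circle `C` (center `c`, radius `r`) carries four points `x₁ x₂ x₃ x₄` in
cyclic order (given by increasing angles spanning less than a full turn), with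
`x₁, x₃` in the interior of `Q` and `x₂, x₄` in the interior of `P`, then no
circle separates `P` from `Q`. -/
theorem no_separating_circle_of_four_alternating_points
    (P Q : Set (EuclideanSpace ℝ (Fin 2)))
    (c : EuclideanSpace ℝ (Fin 2)) (r : ℝ) (hr : 0 < r)
    (pt : ℝ → EuclideanSpace ℝ (Fin 2))
    (hpt : ∀ θ : ℝ, pt θ = c + r • (WithLp.equiv 2 (Fin 2 → ℝ)).symm ![cos θ, sin θ])
    (θ₁ θ₂ θ₃ θ₄ : ℝ)
    (h12 : θ₁ < θ₂) (h23 : θ₂ < θ₃) (h34 : θ₃ < θ₄) (h41 : θ₄ < θ₁ + 2 * π)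
    (hx₁ : pt θ₁ ∈ interior Q) (hx₂ : pt θ₂ ∈ interior P)
    (hx₃ : pt θ₃ ∈ interior Q) (hx₄ : pt θ₄ ∈ interior P) :
    ¬ ∃ (σ : EuclideanSpace ℝ (Fin 2)) (ρ : ℝ),
        (interior P ⊆ ball σ ρ ∧ interior Q ∩ ball σ ρ = ∅) ∨
        (interior Q ⊆ ball σ ρ ∧ interior P ∩ ball σ ρ = ∅) := by
  rintro ⟨σ, ρ, hcase⟩
  -- coordinates of pt θ
  have hc0 : ∀ θ, pt θ 0 = c 0 + r * Real.cos θ := by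
    intro θ
    rw [hpt]
    simp [WithLp.equiv_symm_apply, PiLp.toLp_apply]
  have hc1 : ∀ θ, pt θ 1 = c 1 + r * Real.sin θ := by
    intro θ
    rw [hpt]
    simp [WithLp.equiv_symm_apply, PiLp.toLp_apply]
  -- squared distance formula
  set a : ℝ := (c 0 - σ 0)^2 + (c 1 - σ 1)^2 + r^2 - ρ^2 with ha
  set b : ℝ := 2 * r * (c 0 - σ 0) with hb
  set d : ℝ := 2 * r * (c 1 - σ 1) with hd
  have hdist : ∀ θ, dist (pt θ) σ ^ 2 = a + b * Real.cos θ + d * Real.sin θ + ρ^2 := by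
    intro θ
    rw [EuclideanSpace.dist_eq, Real.sq_sqrt (by positivity)]
    rw [Fin.sum_univ_two, hc0, hc1]
    simp only [Real.dist_eq, sq_abs]
    have := Real.sin_sq_add_cos_sq θ
    rw [ha, hb, hd]
    nlinarith [Real.sin_sq_add_cos_sq θ]
  -- translation lemmas
  have hin : ∀ θ, pt θ ∈ ball σ ρ → a + b * Real.cos θ + d * Real.sin θ < 0 := by
    intro θ h
    rw [mem_ball] at h
    have hdn : (0:ℝ) ≤ dist (pt θ) σ := dist_nonneg
    have h2 : dist (pt θ) σ ^ 2 < ρ ^ 2 := by nlinarith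
    rw [hdist θ] at h2; linarith
  have hρpos : 0 < ρ := by
    rcases hcase with ⟨hsub, _⟩ | ⟨hsub, _⟩
    · exact lt_of_le_of_lt dist_nonneg (mem_ball.mp (hsub hx₂))
    · exact lt_of_le_of_lt dist_nonneg (mem_ball.mp (hsub hx₁))
  have hout : ∀ θ, pt θ ∉ ball σ ρ → 0 ≤ a + b * Real.cos θ + d * Real.sin θ := by
    intro θ h
    rw [mem_ball, not_lt] at h
    have h2 : ρ ^ 2 ≤ dist (pt θ) σ ^ 2 := pow_le_pow_left₀ hρpos.le h 2
    rw [hdist θ] at h2; linarith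
  rcases hcase with ⟨hsub, hdisj⟩ | ⟨hsub, hdisj⟩
  · -- interior P ⊆ ball, interior Q ∩ ball = ∅
    have g1 := hout θ₁ (fun h => Set.eq_empty_iff_forall_notMem.mp hdisj _ ⟨hx₁, h⟩)
    have g2 := hin θ₂ (hsub hx₂)
    have g3 := hout θ₃ (fun h => Set.eq_empty_iff_forall_notMem.mp hdisj _ ⟨hx₃, h⟩)
    have g4 := hin θ₄ (hsub hx₄)
    exact key_sign a b d θ₁ θ₂ θ₃ θ₄ h12 h23 h34 h41 g1 g2 g3 g4
  · -- interior Q ⊆ ball, interior P ∩ ball = ∅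
    have g2 := hout θ₂ (fun h => Set.eq_empty_iff_forall_notMem.mp hdisj _ ⟨hx₂, h⟩)
    have g3 := hin θ₃ (hsub hx₃)
    have g4 := hout θ₄ (fun h => Set.eq_empty_iff_forall_notMem.mp hdisj _ ⟨hx₄, h⟩)
    have g1 := hin θ₁ (hsub hx₁)
    have g1' : a + b * Real.cos (θ₁ + 2*π) + d * Real.sin (θ₁ + 2*π) < 0 := by
      rw [Real.cos_add_two_pi, Real.sin_add_two_pi]; exact g1
    exact key_sign a b d θ₂ θ₃ θ₄ (θ₁ + 2*π) h23 h34 h41 (by linarith) g2 g3 g4 g1'
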